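/- Let f : [0,1] → 2^[0,1] be upper semicontinuous, almost nonfissile, with connected graph having empty interior, and surjective. If there exist y ∈ [0,1] and a nondegenerate closed interval I ⊆ [0,1] such that y ∈ f(x) for every x ∈ I, then f(x) = {y} for every x ∈ I; that is, f is constant and single-valued on I. (Weak continuity of f is assumed.) -/

import Mathlib

open Set Filter Topology

/-- The graph of a set-valued function on `[0,1]`. -/
def GraphSV (f : ℝ → Set ℝ) : Set (ℝ × ℝ) :=
  {p | p.1 ∈ Icc (0:ℝ) 1 ∧ p.2 ∈ f p.1}

/-- Upper semicontinuous set-valued function `[0,1] → 2^[0,1]`: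
nonempty compact values inside `[0,1]` and closed graph. -/
def USC (f : ℝ → Set ℝ) : Prop :=
  (∀ x ∈ Icc (0:ℝ) 1, (f x).Nonempty ∧ f x ⊆ Icc (0:ℝ) 1 ∧ IsCompact (f x)) ∧
    IsClosed (GraphSV f)

/-- The intermediate value property. -/
def IVP (f : ℝ → Set ℝ) : Prop :=
  ∀ x₁ ∈ Icc (0:ℝ) 1, ∀ x₂ ∈ Icc (0:ℝ) 1, x₁ ≠ x₂ →
    ∀ y₁ ∈ f x₁, ∀ y₂ ∈ f x₂, y₁ ≠ y₂ →
      ∀ y ∈ Ioo (min y₁ y₂) (max y₁ y₂),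
        ∃ x ∈ Ioo (min x₁ x₂) (max x₁ x₂), y ∈ f x

/-- The weak intermediate value property. -/
def WIVP (f : ℝ → Set ℝ) : Prop :=
  ∀ x₁ ∈ Icc (0:ℝ) 1, ∀ x₂ ∈ Icc (0:ℝ) 1, x₁ ≠ x₂ →
    ∀ y₁ ∈ f x₁, ∃ y₂ ∈ f x₂,
      ∀ y ∈ Icc (min y₁ y₂) (max y₁ y₂),
        ∃ x ∈ Icc (min x₁ x₂) (max x₁ x₂), y ∈ f x

/-- Weak continuity (from the left and the right) at each interior point. -/
def WeakCont (f : ℝ → Set ℝ) : Prop :=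
  ∀ x ∈ Ioo (0:ℝ) 1, ∀ y ∈ f x,
    (∃ u : ℕ → ℝ × ℝ, (∀ k, u k ∈ GraphSV f ∧ (u k).1 < x) ∧
      Tendsto u atTop (𝓝 (x, y))) ∧
    (∃ u : ℕ → ℝ × ℝ, (∀ k, u k ∈ GraphSV f ∧ x < (u k).1) ∧
      Tendsto u atTop (𝓝 (x, y)))

/-- `f` is almost nonfissile: the nonfissile points of the graph are dense in the graph. -/
def AlmostNonfissile (f : ℝ → Set ℝ) : Prop :=
  GraphSV f ⊆ closure {p | p ∈ GraphSV f ∧ f p.1 = {p.2}}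

/-- `f` is light: each fiber `{x : y ∈ f x}` has empty interior in `[0,1]`. -/
def Light (f : ℝ → Set ℝ) : Prop :=
  ∀ y : ℝ, ∀ U : Set ℝ, IsOpen U → (U ∩ Icc (0:ℝ) 1).Nonempty →
    ∃ x ∈ U ∩ Icc (0:ℝ) 1, y ∉ f x

/-- `f` is surjective onto `[0,1]`. -/
def Surj (f : ℝ → Set ℝ) : Prop :=
  ∀ y ∈ Icc (0:ℝ) 1, ∃ x ∈ Icc (0:ℝ) 1, y ∈ f x

/-- The `n`-fold set-valued composition of `f`. -/
def fIter (f : ℝ → Set ℝ) : ℕ → ℝ → Set ℝ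
  | 0, x => {x}
  | n + 1, x => ⋃ z ∈ fIter f n x, f z

/-- The image `f^n[A] = ⋃_{a ∈ A} f^n(a)`. -/
def imIter (f : ℝ → Set ℝ) (n : ℕ) (A : Set ℝ) : Set ℝ :=
  ⋃ a ∈ A, fIter f n a

/-- The inverse limit of the single bonding function `f` on `[0,1]`. -/
def InvLim (f : ℝ → Set ℝ) : Set (ℕ → ℝ) :=
  {z | (∀ i, z i ∈ Icc (0:ℝ) 1) ∧ ∀ i, z i ∈ f (z (i + 1))}

/-- `X` is irreducible between `x` and `y`: the only subcontinuum of `X`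
containing both is `X` itself. -/
def IrreducibleBetween (X : Set (ℕ → ℝ)) (x y : ℕ → ℝ) : Prop :=
  x ∈ X ∧ y ∈ X ∧
    ∀ K ⊆ X, IsCompact K → IsConnected K → x ∈ K → y ∈ K → K = X

/-- a common value on a nondegenerate interval forces `f` to be
constant and single-valued there. -/
theorem stmt5 (f : ℝ → Set ℝ) (hf : USC f) (hanf : AlmostNonfissile f)
    (hconn : IsConnected (GraphSV f))
    (hint : ∀ U : Set (ℝ × ℝ), IsOpen U →
      U ∩ (Icc (0:ℝ) 1 ×ˢ Icc (0:ℝ) 1) ⊆ GraphSV f →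
      U ∩ (Icc (0:ℝ) 1 ×ˢ Icc (0:ℝ) 1) = ∅)
    (hsurj : Surj f) (hwc : WeakCont f)
    (y : ℝ) (hy : y ∈ Icc (0:ℝ) 1) (a b : ℝ) (hab : a < b)
    (hI : Icc a b ⊆ Icc (0:ℝ) 1) (hyf : ∀ t ∈ Icc a b, y ∈ f t) :
    ∀ t ∈ Icc a b, f t = {y} := by
  have ha0 : (0:ℝ) ≤ a := (hI (left_mem_Icc.2 hab.le)).1
  have hb1 : b ≤ 1 := (hI (right_mem_Icc.2 hab.le)).2
  -- Key lemma via almost nonfissility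
  have key : ∀ t, t ∈ Icc a b → ∀ s, s ∈ f t →
      (∃ ε > 0, ∀ x ∈ Icc (0:ℝ) 1, |x - t| < ε → x ∈ Icc a b) → s = y := by
    rintro t ht s hs ⟨ε, hε, hloc⟩
    have hG : (t, s) ∈ GraphSV f := ⟨hI ht, hs⟩
    obtain ⟨u, hu, hlim⟩ := mem_closure_iff_seq_limit.1 (hanf hG)
    have h1 : Tendsto (fun n => (u n).1) atTop (𝓝 t) :=
      (continuous_fst.tendsto _).comp hlim
    have h2 : Tendsto (fun n => (u n).2) atTop (𝓝 s) :=
      (continuous_snd.tendsto _).comp hlim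
    have hev : ∀ᶠ n in atTop, (u n).1 ∈ Metric.ball t ε :=
      h1 (Metric.ball_mem_nhds t hε)
    have hev2 : ∀ᶠ n in atTop, (u n).2 = y := by
      refine hev.mono fun n hn => ?_
      have hGn := (hu n).1
      have hx : (u n).1 ∈ Icc a b := by
        refine hloc _ hGn.1 ?_
        simpa [Real.dist_eq] using hn
      have hyy : y ∈ f (u n).1 := hyf _ hx
      rw [(hu n).2] at hyy
      exact (mem_singleton_iff.1 hyy).symm
    have : Tendsto (fun n => (u n).2) atTop (𝓝 y) :=
      Tendsto.congr' (hev2.mono fun n h => h.symm) tendsto_const_nhds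
    exact tendsto_nhds_unique h2 this
  -- Interior points
  have hintc : ∀ t, t ∈ Ioo a b → ∀ s, s ∈ f t → s = y := by
    intro t ht s hs
    refine key t (Ioo_subset_Icc_self ht) s hs
      ⟨min (t - a) (b - t), by simp [ht.1, ht.2, sub_pos], fun x _ hxd => ?_⟩
    rw [abs_lt] at hxd
    constructor
    · nlinarith [lt_min_iff.1 hxd.2, hxd.1, min_le_left (t - a) (b - t)]
    · nlinarith [lt_of_lt_of_le hxd.2 (min_le_right (t - a) (b - t))]
  -- Endpoint via weak continuity: a sequence of interior graph points converging to (t, s)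
  have seqcase : ∀ t s : ℝ, ∀ u : ℕ → ℝ × ℝ, (∀ k, u k ∈ GraphSV f) →
      (∀ᶠ k in atTop, (u k).1 ∈ Ioo a b) →
      Tendsto u atTop (𝓝 (t, s)) → s = y := by
    intro t s u hu hev hlim
    have h2 : Tendsto (fun k => (u k).2) atTop (𝓝 s) :=
      (continuous_snd.tendsto _).comp hlim
    have hev2 : ∀ᶠ k in atTop, (u k).2 = y :=
      hev.mono fun k hk => hintc _ hk _ (hu k).2
    have : Tendsto (fun k => (u k).2) atTop (𝓝 y) :=
      Tendsto.congr' (hev2.mono fun n h => h.symm) tendsto_const_nhds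
    exact tendsto_nhds_unique h2 this
  intro t ht
  refine Set.eq_singleton_iff_unique_mem.2 ⟨hyf t ht, fun s hs => ?_⟩
  rcases eq_or_lt_of_le ht.1 with rfl | hat
  · -- t = a
    rcases eq_or_lt_of_le ha0 with rfl | h0
    · -- a = 0
      refine key 0 (left_mem_Icc.2 hab.le) s hs ⟨b, hab, fun x hx hxd => ?_⟩
      rw [sub_zero, abs_of_nonneg hx.1] at hxd
      exact ⟨hx.1, hxd.le⟩
    · -- 0 < a : use right-sequence from weak continuity
      obtain ⟨_, u, hu, hlim⟩ := hwc a ⟨h0, lt_of_lt_of_le hab hb1⟩ s hs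
      have h1 : Tendsto (fun k => (u k).1) atTop (𝓝 a) :=
        (continuous_fst.tendsto _).comp hlim
      have hev : ∀ᶠ k in atTop, (u k).1 ∈ Ioo a b := by
        filter_upwards [h1 (Iio_mem_nhds hab)] with k hk
        exact ⟨(hu k).2, hk⟩
      exact seqcase a s u (fun k => (hu k).1) hev hlim
  · rcases eq_or_lt_of_le ht.2 with rfl | htb
    · -- t = b
      rcases eq_or_lt_of_le hb1 with rfl | h1b
      · -- b = 1
        refine key 1 (right_mem_Icc.2 hab.le) s hs ⟨1 - a, sub_pos.2 hab,
          fun x hx hxd => ?_⟩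
        rw [abs_lt] at hxd
        exact ⟨by linarith [hxd.1], hx.2⟩
      · -- b < 1 : use left-sequence from weak continuity
        obtain ⟨⟨u, hu, hlim⟩, _⟩ := hwc t ⟨lt_of_le_of_lt ha0 hab, h1b⟩ s hs
        have h1 : Tendsto (fun k => (u k).1) atTop (𝓝 t) :=
          (continuous_fst.tendsto _).comp hlim
        have hev : ∀ᶠ k in atTop, (u k).1 ∈ Ioo a t := by
          filter_upwards [h1 (Ioi_mem_nhds hab)] with k hk
          exact ⟨hk, (hu k).2⟩
        exact seqcase t s u (fun k => (hu k).1) hev hlim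
    · exact hintc t ⟨hat, htb⟩ s hs
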